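/- Fix real numbers α ≥ β > 1/2. In any finite election (voters with strict rankings over candidates C), there exists a candidate j* ∈ C that is (α, β)-unblanketed: for every i* ≠ j*, there exists a candidate k such that (k = i* or s_{k≻i*} ≥ α), and either s_{k≻j*} ≤ β, or (s_{k≻j*} ≤ α and there exists ℓ ∉ {k, j*} with s_{k≻ℓ} ≤ β ≤ s_{j*≻ℓ}). -/

import Mathlib

/-- Existence of an (α,β)-unblanketed candidate, for α ≥ β > 1/2, in any finite
election: there is a candidate `j*` such that for every `i* ≠ j*` there exists a
candidate `k` with (`k = i*` or `s_{k≻i*} ≥ α`) and either `s_{k≻j*} ≤ β`, or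
(`s_{k≻j*} ≤ α` and there exists `ℓ ∉ {k, j*}` with `s_{k≻ℓ} ≤ β ≤ s_{j*≻ℓ}`). -/
theorem stmt9 {V C : Type*} [Fintype V] [Nonempty V] [Fintype C] [Nonempty C]
    (pref : V → C → C → Prop) [∀ v, DecidableRel (pref v)]
    (htrans : ∀ v, Transitive (pref v))
    (hirr : ∀ v a b, pref v a b → ¬ pref v b a)
    (htotal : ∀ v (a b : C), a ≠ b → pref v a b ∨ pref v b a)
    (s : C → C → ℝ)
    (hs : ∀ a b, s a b =
      ((Finset.univ.filter fun v => pref v a b).card : ℝ) / (Fintype.card V))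
    (α β : ℝ) (hαβ : β ≤ α) (hβ : 1/2 < β) :
    ∃ jstar : C, ∀ istar : C, istar ≠ jstar →
      ∃ k : C, (k = istar ∨ s k istar ≥ α) ∧
        (s k jstar ≤ β ∨
          (s k jstar ≤ α ∧ ∃ l : C, l ≠ k ∧ l ≠ jstar ∧ s k l ≤ β ∧ β ≤ s jstar l)) := by
  by_contra hcon
  push_neg at hcon
  choose b hbne hbl using hcon
  -- basic facts about s
  have hcardV : (0:ℝ) < (Fintype.card V : ℝ) := by
    exact_mod_cast Fintype.card_pos
  have hself : ∀ a : C, s a a = 0 := by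
    intro a
    rw [hs]
    have h0 : (Finset.univ.filter fun v => pref v a a) = ∅ := by
      ext v
      simp only [Finset.mem_filter, Finset.mem_univ, true_and, Finset.notMem_empty,
        iff_false]
      intro h
      exact hirr v a a h h
    rw [h0]
    simp
  have hsum : ∀ a bb : C, a ≠ bb → s a bb + s bb a = 1 := by
    intro a bb hab
    rw [hs, hs, ← add_div, div_eq_one_iff_eq (ne_of_gt hcardV)]
    have h1 : (Finset.univ.filter fun v => pref v bb a)
        = Finset.univ.filter fun v => ¬ pref v a bb := by
      ext v
      simp only [Finset.mem_filter, Finset.mem_univ, true_and]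
      constructor
      · intro h
        exact hirr v bb a h
      · intro h
        rcases htotal v a bb hab with h' | h'
        · exact absurd h' h
        · exact h'
    rw [h1]
    norm_cast
    rw [Finset.card_filter_add_card_filter_not, Finset.card_univ]
  -- the "blanket" function b : every j is blanketed by b j
  -- find a periodic point of b
  have hcyc : ∃ (x : C) (n : ℕ), 0 < n ∧ b^[n] x = x := by
    obtain ⟨m, m', hne, heq⟩ :=
      Finite.exists_ne_map_eq_of_infinite (fun t : ℕ => b^[t] (Classical.arbitrary C))
    rcases hne.lt_or_gt with h | h
    · refine ⟨b^[m] (Classical.arbitrary C), m' - m, by omega, ?_⟩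
      rw [← Function.iterate_add_apply, show m' - m + m = m' from by omega]
      exact heq.symm
    · refine ⟨b^[m'] (Classical.arbitrary C), m - m', by omega, ?_⟩
      rw [← Function.iterate_add_apply, show m - m' + m' = m from by omega]
      exact heq
  obtain ⟨x, n, hn, hx⟩ := hcyc
  set c : ℕ → C := fun t => b^[t] x with hc
  have hcs : ∀ t, c (t + 1) = b (c t) := by
    intro t
    simp only [hc, Function.iterate_succ_apply']
  have hper : ∀ t, c (t + n) = c t := by
    intro t
    simp only [hc, Function.iterate_add_apply, hx]
  -- the key property Q
  set Q : C → C → Prop := fun y z => β < s y z ∧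
    (s y z ≤ α → ∀ l, l ≠ y → l ≠ z → s y l ≤ β → s z l < β) with hQdef
  have hQ1 : ∀ j, Q (c (j + 1)) (c j) := by
    intro j
    exact hbl (c j) (c (j + 1)) (Or.inl (hcs j))
  have hQ2 : ∀ j y, α < s y (c (j + 1)) → Q y (c j) := by
    intro j y h
    refine hbl (c j) y (Or.inr ?_)
    rw [← hcs j]
    exact le_of_lt h
  -- descent lemma
  have descent : ∀ m j y, Q y (c (j + m)) →
      (∃ t, Q y (c t) ∧ s y (c t) ≤ α) ∨ Q y (c j) := by
    intro m
    induction m with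
    | zero => intro j y h; exact Or.inr h
    | succ m ih =>
      intro j y h
      by_cases hα : s y (c (j + (m + 1))) ≤ α
      · exact Or.inl ⟨j + (m + 1), h, hα⟩
      · push_neg at hα
        exact ih j y (hQ2 (j + m) y hα)
  -- for every i there is t with Q (c (i+1)) (c t) and s ≤ α
  have hkey : ∀ i, ∃ t, Q (c (i + 1)) (c t) ∧ s (c (i + 1)) (c t) ≤ α := by
    intro i
    have h0 : Q (c (i + 1)) (c ((i + 1) + (n - 1))) := by
      rw [show (i + 1) + (n - 1) = i + n from by omega, hper i]
      exact hQ1 i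
    rcases descent (n - 1) (i + 1) (c (i + 1)) h0 with h | h
    · exact h
    · exfalso
      have := h.1
      rw [hself] at this
      linarith
  -- the dominated-set counter
  set g : C → ℕ := fun z => (Finset.univ.filter fun l => β ≤ s z l).card with hg
  have hlt : ∀ i, ∃ t, g (c t) < g (c (i + 1)) := by
    intro i
    obtain ⟨t, ⟨hβlt, hB⟩, hα⟩ := hkey i
    refine ⟨t, ?_⟩
    have hne' : c t ≠ c (i + 1) := by
      intro h
      rw [h, hself] at hβlt
      linarith
    have hBB := hB hα
    have hsub : (Finset.univ.filter fun l => β ≤ s (c t) l)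
        ⊆ Finset.univ.filter fun l => β ≤ s (c (i + 1)) l := by
      intro l hl
      simp only [Finset.mem_filter, Finset.mem_univ, true_and] at hl ⊢
      by_contra h'
      push_neg at h'
      have hlz : l ≠ c t := by
        intro h
        rw [h, hself] at hl
        linarith
      have hly : l ≠ c (i + 1) := by
        intro h
        subst h
        have h2 := hsum (c t) (c (i + 1)) hne'
        linarith
      have := hBB l hly hlz (le_of_lt h')
      linarith
    have hmem : c t ∈ Finset.univ.filter fun l => β ≤ s (c (i + 1)) l := by
      simp only [Finset.mem_filter, Finset.mem_univ, true_and]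
      linarith
    have hnmem : c t ∉ Finset.univ.filter fun l => β ≤ s (c t) l := by
      simp only [Finset.mem_filter, Finset.mem_univ, true_and, not_le, hself]
      linarith
    exact Finset.card_lt_card ⟨hsub, fun h => hnmem (h hmem)⟩
  -- every index j has smaller counter somewhere
  have hall : ∀ j, ∃ t, g (c t) < g (c j) := by
    intro j
    obtain ⟨t, ht⟩ := hlt (j + n - 1)
    rw [show (j + n - 1) + 1 = j + n from by omega, hper j] at ht
    exact ⟨t, ht⟩
  -- infinite descent
  have hdesc : ∀ m t, g (c t) < m → False := by
    intro m
    induction m with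
    | zero => intro t h; omega
    | succ m ih =>
      intro t h
      obtain ⟨t', h'⟩ := hall t
      exact ih t' (by omega)
  exact hdesc (g (c 0) + 1) 0 (Nat.lt_succ_self _)
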